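/- A point x ∈ ℝ^n satisfies (a⁰)ᵀx + ∑_{l=1}^L ξ_l (aˡ)ᵀx ≤ b⁰ + ∑_{l=1}^L ξ_l bˡ for all ξ with ‖ξ‖_2 ≤ Ω if and only if (a⁰)ᵀx + Ω·√(∑_{l=1}^L ((aˡ)ᵀx − bˡ)²) ≤ b⁰. -/

import Mathlib

open Finset

/-- Robust constraint under ellipsoidal uncertainty is equivalent to a single
conic quadratic inequality. -/
theorem robust_ellipsoid_reformulation (n L : ℕ) (x a0 : Fin n → ℝ) (b0 : ℝ)
    (a : Fin L → Fin n → ℝ) (b : Fin L → ℝ) (Ω : ℝ) (hΩ : 0 < Ω) :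
    (∀ ξ : Fin L → ℝ, Real.sqrt (∑ l, (ξ l) ^ 2) ≤ Ω →
        (∑ i, a0 i * x i) + ∑ l, ξ l * (∑ i, a l i * x i) ≤ b0 + ∑ l, ξ l * b l) ↔
      (∑ i, a0 i * x i) +
          Ω * Real.sqrt (∑ l, ((∑ i, a l i * x i) - b l) ^ 2) ≤ b0 := by
  set c : Fin L → ℝ := fun l => (∑ i, a l i * x i) - b l with hc
  set A : ℝ := ∑ i, a0 i * x i with hA
  set S : ℝ := Real.sqrt (∑ l, c l ^ 2) with hS
  have hSnn : 0 ≤ S := Real.sqrt_nonneg _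
  have hsum_nn : (0:ℝ) ≤ ∑ l, c l ^ 2 := Finset.sum_nonneg fun l _ => sq_nonneg _
  have key : ∀ ξ : Fin L → ℝ,
      (A + ∑ l, ξ l * (∑ i, a l i * x i) ≤ b0 + ∑ l, ξ l * b l) ↔
      (∑ l, ξ l * c l ≤ b0 - A) := by
    intro ξ
    have : ∑ l, ξ l * c l = (∑ l, ξ l * (∑ i, a l i * x i)) - ∑ l, ξ l * b l := by
      rw [← Finset.sum_sub_distrib]
      apply Finset.sum_congr rfl
      intro l _
      simp [hc, mul_sub]
    rw [this]
    constructor <;> intro h <;> linarith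
  constructor
  · intro h
    by_cases hS0 : S = 0
    · have := h 0 (by simp [le_of_lt hΩ])
      rw [hS0]
      simpa using this
    · have hSpos : 0 < S := lt_of_le_of_ne hSnn (Ne.symm hS0)
      set ξ : Fin L → ℝ := fun l => (Ω / S) * c l with hξ
      have hnorm : Real.sqrt (∑ l, (ξ l) ^ 2) ≤ Ω := by
        have : ∑ l, (ξ l) ^ 2 = (Ω / S) ^ 2 * ∑ l, c l ^ 2 := by
          rw [Finset.mul_sum]
          apply Finset.sum_congr rfl
          intro l _
          ring
        rw [this, Real.sqrt_mul (sq_nonneg _), Real.sqrt_sq (by positivity)]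
        have : Real.sqrt (∑ l, c l ^ 2) = S := rfl
        rw [this, div_mul_cancel₀ _ (ne_of_gt hSpos)]
      have h2 := (key ξ).mp (h ξ hnorm)
      have : ∑ l, ξ l * c l = Ω * S := by
        have : ∑ l, ξ l * c l = (Ω / S) * ∑ l, c l ^ 2 := by
          rw [Finset.mul_sum]
          apply Finset.sum_congr rfl
          intro l _
          ring
        rw [this]
        have hsq : ∑ l, c l ^ 2 = S * S := by
          rw [hS, Real.mul_self_sqrt hsum_nn]
        rw [hsq]
        field_simp
      linarith [this ▸ h2]
  · intro h ξ hξ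
    rw [key ξ]
    have cs := Real.sum_mul_le_sqrt_mul_sqrt Finset.univ ξ c
    have h2 : Real.sqrt (∑ l, (ξ l) ^ 2) * Real.sqrt (∑ l, c l ^ 2) ≤ Ω * S :=
      mul_le_mul_of_nonneg_right hξ hSnn
    linarith
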